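/- (Completeness of LNS_KB) For every mono-modal formula φ built from atoms, ⊥, →, □: if φ is forced at every world of every Kripke model ⟨W,R,V⟩ with R symmetric, then the linear nested sequent ε ⇒ φ is derivable in LNS_KB. -/

import Mathlib

/-- Mono-modal formulae: atoms, ⊥, →, □, ◇. -/
inductive KFormula : Type
  | atom : ℕ → KFormula
  | bot : KFormula
  | imp : KFormula → KFormula → KFormula
  | box : KFormula → KFormula
  | dia : KFormula → KFormula

def KFormula.neg (A : KFormula) : KFormula := A.imp .bot
def KFormula.and (A B : KFormula) : KFormula := (A.imp B.neg).neg
def KFormula.or (A B : KFormula) : KFormula := A.neg.imp B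
def KFormula.top : KFormula := KFormula.bot.imp .bot

/-- Mono-modal formulae built from atoms, ⊥, →, □ only. -/
def KFormula.NoDia : KFormula → Prop
  | .atom _ => True
  | .bot => True
  | .imp A B => A.NoDia ∧ B.NoDia
  | .box A => A.NoDia
  | .dia _ => False

/-- Linear nested sequents for KB: components joined by ↗ only. -/
inductive KLNS : Type
  | single (Γ Δ : Multiset KFormula) : KLNS
  | up (Γ Δ : Multiset KFormula) (S : KLNS) : KLNS

/-- A (possibly empty) context for KB sequents. -/
abbrev KCtx := List (Multiset KFormula × Multiset KFormula)

def plugK : KCtx → KLNS → KLNS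
  | [], S => S
  | (Γ, Δ) :: G, S => KLNS.up Γ Δ (plugK G S)

/-- Kripke forcing for mono-modal logic. -/
def KForce {W : Type} (R : W → W → Prop) (V : W → ℕ → Prop) : W → KFormula → Prop
  | w, .atom p => V w p
  | _, .bot => False
  | w, .imp A B => KForce R V w A → KForce R V w B
  | w, .box A => ∀ v, R w v → KForce R V v A
  | w, .dia A => ∃ v, R w v ∧ KForce R V v A

noncomputable def bigAndK (Γ : Multiset KFormula) : KFormula :=
  Γ.toList.foldr KFormula.and KFormula.top

noncomputable def bigOrK (Δ : Multiset KFormula) : KFormula :=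
  Δ.toList.foldr KFormula.or KFormula.bot

/-- The formula translation τ of a linear nested sequent for KB. -/
noncomputable def tauK : KLNS → KFormula
  | .single Γ Δ => (bigAndK Γ).imp (bigOrK Δ)
  | .up Γ Δ S => (bigAndK Γ).imp ((bigOrK Δ).or (tauK S).box)

/-- The calculus LNS_KB. -/
inductive DerivKB : KLNS → Prop
  | id (G : KCtx) (Γ Δ : Multiset KFormula) (p : ℕ) :
      DerivKB (plugK G (.single (.atom p ::ₘ Γ) (.atom p ::ₘ Δ)))
  | botL (G : KCtx) (Γ Δ : Multiset KFormula) :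
      DerivKB (plugK G (.single (.bot ::ₘ Γ) Δ))
  | ew (G : KCtx) (Θ Λ : Multiset KFormula) (Γ Δ : Multiset KFormula) :
      DerivKB (plugK G (.single Θ Λ)) →
      DerivKB (plugK (G ++ [(Θ, Λ)]) (.single Γ Δ))
  | impR (G : KCtx) (Γ Δ : Multiset KFormula) (A B : KFormula) :
      DerivKB (plugK G (.single (A ::ₘ Γ) (B ::ₘ A.imp B ::ₘ Δ))) →
      DerivKB (plugK G (.single Γ (A.imp B ::ₘ Δ)))
  | impL (G : KCtx) (Γ Δ : Multiset KFormula) (A B : KFormula) :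
      DerivKB (plugK G (.single (B ::ₘ A.imp B ::ₘ Γ) Δ)) →
      DerivKB (plugK G (.single (A.imp B ::ₘ Γ) (A ::ₘ Δ))) →
      DerivKB (plugK G (.single (A.imp B ::ₘ Γ) Δ))
  | boxR (G : KCtx) (Γ Δ : Multiset KFormula) (A : KFormula) :
      DerivKB (plugK G (.up Γ (A.box ::ₘ Δ) (.single 0 {A}))) →
      DerivKB (plugK G (.single Γ (A.box ::ₘ Δ)))
  | boxL1 (G : KCtx) (Γ Δ Θ Λ : Multiset KFormula) (A : KFormula) :
      DerivKB (plugK G (.up (A.box ::ₘ Γ) Δ (.single (A ::ₘ Θ) Λ))) →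
      DerivKB (plugK G (.up (A.box ::ₘ Γ) Δ (.single Θ Λ)))
  | boxL2 (G : KCtx) (Γ Δ Θ Λ : Multiset KFormula) (A : KFormula) :
      DerivKB (plugK G (.single (A ::ₘ Γ) Δ)) →
      DerivKB (plugK G (.up Γ Δ (.single (A.box ::ₘ Θ) Λ)))


/- ===== auxiliary development ===== -/

noncomputable section
namespace LNSKB
open KFormula

noncomputable instance : DecidableEq KFormula := Classical.decEq _

/-- Subformula closure. -/
def subF : KFormula → Finset KFormula
  | .atom p => {.atom p}
  | .bot => {.bot}
  | .imp A B => insert (KFormula.imp A B) (subF A ∪ subF B)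
  | .box A => insert A.box (subF A)
  | .dia A => insert A.dia (subF A)

lemma mem_subF_self (A : KFormula) : A ∈ subF A := by
  cases A <;> simp [subF]

/-- A set of formulae closed under subformulae, all without ◇. -/
structure Closed (u : Finset KFormula) : Prop where
  impc : ∀ A B, KFormula.imp A B ∈ u → A ∈ u ∧ B ∈ u
  boxc : ∀ A, KFormula.box A ∈ u → A ∈ u
  nod : ∀ A ∈ u, A.NoDia

lemma subF_sub (A : KFormula) (hA : A.NoDia) : ∀ B ∈ subF A, B.NoDia ∧ subF B ⊆ subF A := by
  induction A with
  | atom p => intro B hB; simp [subF] at hB; subst hB; exact ⟨trivial, by simp [subF]⟩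
  | bot => intro B hB; simp [subF] at hB; subst hB; exact ⟨trivial, by simp [subF]⟩
  | imp A B ihA ihB =>
      intro C hC
      simp only [subF, Finset.mem_insert, Finset.mem_union] at hC
      rcases hC with h | h | h
      · subst h; exact ⟨hA, le_refl _⟩
      · obtain ⟨h1, h2⟩ := ihA hA.1 C h
        refine ⟨h1, h2.trans ?_⟩
        intro x hx
        simp only [subF, Finset.mem_insert, Finset.mem_union]
        exact Or.inr (Or.inl hx)
      · obtain ⟨h1, h2⟩ := ihB hA.2 C h
        refine ⟨h1, h2.trans ?_⟩
        intro x hx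
        simp only [subF, Finset.mem_insert, Finset.mem_union]
        exact Or.inr (Or.inr hx)
  | box A ihA =>
      intro C hC
      simp only [subF, Finset.mem_insert] at hC
      rcases hC with h | h
      · subst h; exact ⟨hA, le_refl _⟩
      · obtain ⟨h1, h2⟩ := ihA hA C h
        refine ⟨h1, h2.trans ?_⟩
        intro x hx
        simp only [subF, Finset.mem_insert]
        exact Or.inr hx
  | dia A ihA => exact absurd hA (by simp [KFormula.NoDia])

lemma closed_subF (A : KFormula) (hA : A.NoDia) : Closed (subF A) := by
  refine ⟨?_, ?_, fun B hB => (subF_sub A hA B hB).1⟩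
  · intro B C hBC
    have := (subF_sub A hA _ hBC).2
    constructor
    · refine this ?_
      simp only [subF, Finset.mem_insert, Finset.mem_union]
      exact Or.inr (Or.inl (mem_subF_self B))
    · refine this ?_
      simp only [subF, Finset.mem_insert, Finset.mem_union]
      exact Or.inr (Or.inr (mem_subF_self C))
  · intro B hB
    refine (subF_sub A hA _ hB).2 ?_
    simp only [subF, Finset.mem_insert]
    exact Or.inr (mem_subF_self B)

/-- Consistency of a path. -/
def Con (anc : KCtx) (Γ Δ : Multiset KFormula) : Prop :=
  ¬ DerivKB (plugK anc (.single Γ Δ))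

lemma plugK_append (G H : KCtx) (S : KLNS) :
    plugK (G ++ H) S = plugK G (plugK H S) := by
  induction G with
  | nil => rfl
  | cons a G ih => cases a; simp [plugK, ih]

lemma plugK_concat (G : KCtx) (Sg Pg : Multiset KFormula) (S : KLNS) :
    plugK (G ++ [(Sg, Pg)]) S = plugK G (.up Sg Pg S) := by
  rw [plugK_append]; rfl

lemma con_clash {anc Γ Δ} (h : Con anc Γ Δ) (p : ℕ)
    (h1 : KFormula.atom p ∈ Γ) (h2 : KFormula.atom p ∈ Δ) : False := by
  apply h
  have e1 := Multiset.cons_erase h1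
  have e2 := Multiset.cons_erase h2
  have := DerivKB.id anc (Γ.erase (.atom p)) (Δ.erase (.atom p)) p
  rwa [e1, e2] at this

lemma con_bot {anc Γ Δ} (h : Con anc Γ Δ) (h1 : KFormula.bot ∈ Γ) : False := by
  apply h
  have e1 := Multiset.cons_erase h1
  have := DerivKB.botL anc (Γ.erase .bot) Δ
  rwa [e1] at this

lemma con_impR {anc Γ Δ A B} (h : Con anc Γ Δ) (hm : KFormula.imp A B ∈ Δ) :
    Con anc (A ::ₘ Γ) (B ::ₘ Δ) := by
  intro hd
  apply h
  have e : KFormula.imp A B ::ₘ Δ.erase (.imp A B) = Δ := Multiset.cons_erase hm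
  have := DerivKB.impR anc Γ (Δ.erase (.imp A B)) A B (by rwa [e])
  rwa [e] at this

lemma con_impL {anc Γ Δ A B} (h : Con anc Γ Δ) (hm : KFormula.imp A B ∈ Γ) :
    Con anc (B ::ₘ Γ) Δ ∨ Con anc Γ (A ::ₘ Δ) := by
  by_contra hc
  push_neg at hc
  obtain ⟨h1, h2⟩ := hc
  rw [Con, not_not] at h1 h2
  apply h
  have e : KFormula.imp A B ::ₘ Γ.erase (.imp A B) = Γ := Multiset.cons_erase hm
  have := DerivKB.impL anc (Γ.erase (.imp A B)) Δ A B (by rwa [e]) (by rwa [e])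
  rwa [e] at this

lemma con_boxR {anc Γ Δ A} (h : Con anc Γ Δ) (hm : KFormula.box A ∈ Δ) :
    Con (anc ++ [(Γ, Δ)]) 0 {A} := by
  intro hd
  apply h
  have e : KFormula.box A ::ₘ Δ.erase A.box = Δ := Multiset.cons_erase hm
  have := DerivKB.boxR anc Γ (Δ.erase A.box) A (by rw [e]; rwa [plugK_concat] at hd)
  rwa [e] at this

lemma con_boxL1 {anc Γ Δ Θ Λ A} (h : Con (anc ++ [(Γ, Δ)]) Θ Λ) (hm : KFormula.box A ∈ Γ) :
    Con (anc ++ [(Γ, Δ)]) (A ::ₘ Θ) Λ := by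
  intro hd
  apply h
  have e : KFormula.box A ::ₘ Γ.erase A.box = Γ := Multiset.cons_erase hm
  rw [plugK_concat] at hd ⊢
  have := DerivKB.boxL1 anc (Γ.erase A.box) Δ Θ Λ A (by rwa [e])
  rwa [e] at this

lemma con_boxL2 {anc Sg Pg Γ Δ A} (h : Con (anc ++ [(Sg, Pg)]) Γ Δ)
    (hm : KFormula.box A ∈ Γ) : Con anc (A ::ₘ Sg) Pg := by
  intro hd
  apply h
  have e : KFormula.box A ::ₘ Γ.erase A.box = Γ := Multiset.cons_erase hm
  rw [plugK_concat]
  have := DerivKB.boxL2 anc Sg Pg (Γ.erase A.box) Δ A hd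
  rwa [e] at this

end LNSKB

namespace LNSKB
open KFormula

abbrev MPair := Multiset KFormula × Multiset KFormula

/-- Membership-equality of pairs. -/
def MEq (q q' : MPair) : Prop :=
  (∀ x : KFormula, x ∈ q.1 ↔ x ∈ q'.1) ∧ (∀ x : KFormula, x ∈ q.2 ↔ x ∈ q'.2)

lemma MEq.symm {q q'} (h : MEq q q') : MEq q' q :=
  ⟨fun x => (h.1 x).symm, fun x => (h.2 x).symm⟩

/-- Canonical-model accessibility at the level of pairs. -/
def Rel (q q' : MPair) : Prop :=
  (∀ A, KFormula.box A ∈ q.1 → A ∈ q'.1) ∧ (∀ A, KFormula.box A ∈ q'.1 → A ∈ q.1)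

lemma Rel.symm {q q'} (h : Rel q q') : Rel q' q := ⟨h.2, h.1⟩

lemma Rel_congr_right {q q' r} (h : Rel q q') (e : MEq q' r) : Rel q r :=
  ⟨fun A hA => (e.1 A).mp (h.1 A hA), fun A hA => h.2 A ((e.1 (KFormula.box A)).mpr hA)⟩

/-- Propositional saturation. -/
def PropSatP (Γ Δ : Multiset KFormula) : Prop :=
  (∀ A B, KFormula.imp A B ∈ Γ → A ∈ Δ ∨ B ∈ Γ) ∧
  (∀ A B, KFormula.imp A B ∈ Δ → A ∈ Γ ∧ B ∈ Δ)

/-- A good collection of worlds (relative to a universe `u` and list of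
ancestor pairs `anc`). -/
def goodW (u : Finset KFormula) (𝒲 anc : List MPair) : Prop :=
  ∀ q ∈ 𝒲, PropSatP q.1 q.2 ∧
    (∀ p : ℕ, ¬(KFormula.atom p ∈ q.1 ∧ KFormula.atom p ∈ q.2)) ∧
    (KFormula.bot ∉ q.1) ∧
    (∀ x ∈ q.1, x ∈ u) ∧ (∀ x ∈ q.2, x ∈ u) ∧
    (∀ A, KFormula.box A ∈ q.2 →
      ∃ q', (q' ∈ 𝒲 ∨ q' ∈ anc) ∧ Rel q q' ∧ A ∈ q'.2)

lemma goodW_mono {u : Finset KFormula} {𝒲 anc : List MPair} {𝒲' anc' : List MPair}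
    (h : goodW u 𝒲 anc)
    (h3 : ∀ q : MPair, (q ∈ 𝒲 ∨ q ∈ anc) → (q ∈ 𝒲' ∨ q ∈ anc')) :
    ∀ q ∈ 𝒲, PropSatP q.1 q.2 ∧
    (∀ p : ℕ, ¬(KFormula.atom p ∈ q.1 ∧ KFormula.atom p ∈ q.2)) ∧
    (KFormula.bot ∉ q.1) ∧
    (∀ x ∈ q.1, x ∈ u) ∧ (∀ x ∈ q.2, x ∈ u) ∧
    (∀ A, KFormula.box A ∈ q.2 →
      ∃ q', (q' ∈ 𝒲' ∨ q' ∈ anc') ∧ Rel q q' ∧ A ∈ q'.2) := by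
  intro q hq
  obtain ⟨a, b, c, d, e, f⟩ := h q hq
  exact ⟨a, b, c, d, e, fun A hA => by
    obtain ⟨q', hq', hr, hm⟩ := f A hA
    exact ⟨q', h3 q' hq', hr, hm⟩⟩

/-- The result of saturating a node. -/
def Res (u : Finset KFormula) (anc : KCtx) (Γ Δ : Multiset KFormula) : Prop :=
  (∃ A anc' Sg Pg, anc = anc' ++ [(Sg, Pg)] ∧ A ∈ u ∧ A ∉ Sg ∧ Con anc' (A ::ₘ Sg) Pg)
  ∨ (∃ Γ' Δ' 𝒲, (∀ x ∈ Γ, x ∈ Γ') ∧ (∀ x ∈ Δ, x ∈ Δ') ∧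
      (∀ x ∈ Γ', x ∈ u) ∧ (∀ x ∈ Δ', x ∈ u) ∧
      goodW u 𝒲 anc ∧
      (∀ A, KFormula.box A ∈ Γ' → ∀ anc' Sg Pg, anc = anc' ++ [(Sg, Pg)] → A ∈ Sg) ∧
      ((Γ', Δ') ∈ 𝒲 ∨ ∃ q ∈ anc, MEq (Γ', Δ') q))

/-- counting members of the universe occurring in a multiset -/
def sCard (u : Finset KFormula) (Γ : Multiset KFormula) : ℕ :=
  (u.filter (fun A => A ∈ Γ)).card

lemma sCard_le (u Γ) : sCard u Γ ≤ u.card := Finset.card_filter_le _ _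

lemma sCard_cons_le (u Γ A) : sCard u Γ ≤ sCard u (A ::ₘ Γ) := by
  apply Finset.card_le_card
  intro x hx
  simp only [sCard, Finset.mem_filter] at hx ⊢
  exact ⟨hx.1, Multiset.mem_cons_of_mem hx.2⟩

lemma sCard_cons_lt (u Γ A) (hu : A ∈ u) (hn : A ∉ Γ) :
    sCard u Γ < sCard u (A ::ₘ Γ) := by
  apply Finset.card_lt_card
  constructor
  · intro x hx
    simp only [sCard, Finset.mem_filter] at hx ⊢
    exact ⟨hx.1, Multiset.mem_cons_of_mem hx.2⟩
  · intro hsub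
    have : A ∈ u.filter (fun B => B ∈ Γ) := hsub (by
      simp only [Finset.mem_filter]
      exact ⟨hu, Multiset.mem_cons_self _ _⟩)
    simp only [Finset.mem_filter] at this
    exact hn this.2

/-- the measure -/
def Bp (u : Finset KFormula) : ℕ := (u.powerset ×ˢ u.powerset).card

def Cc (u : Finset KFormula) : ℕ := 2 * u.card + 1

def Lm (u : Finset KFormula) : ℕ := Bp u + 2

def μm (u : Finset KFormula) (anc : KCtx) (Γ Δ : Multiset KFormula) : ℕ :=
  (Lm u - anc.length) * Cc u + (2 * u.card - (sCard u Γ + sCard u Δ))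

/-- lists of pairwise membership-distinct pairs over `u` are short -/
lemma pairwise_len {u : Finset KFormula} (l : List MPair)
    (hp : List.Pairwise (fun a b => ¬ MEq a b) l)
    (hu : ∀ q ∈ l, (∀ x ∈ q.1, x ∈ u) ∧ (∀ x ∈ q.2, x ∈ u)) :
    l.length ≤ Bp u := by
  classical
  set f : MPair → Finset KFormula × Finset KFormula :=
    fun q => (u.filter (fun x => x ∈ q.1), u.filter (fun x => x ∈ q.2)) with hf
  have hnd : (l.map f).Nodup := by
    unfold List.Nodup
    rw [List.pairwise_map]
    refine hp.imp_of_mem ?_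
    intro a b ha hb hne heq
    apply hne
    have h1 := congrArg Prod.fst heq
    have h2 := congrArg Prod.snd heq
    simp only [hf] at h1 h2
    constructor
    · intro x
      constructor
      · intro hx
        have hxu : x ∈ u := (hu a ha).1 x hx
        have : x ∈ u.filter (fun y => y ∈ a.1) := Finset.mem_filter.mpr ⟨hxu, hx⟩
        rw [h1] at this
        exact (Finset.mem_filter.mp this).2
      · intro hx
        have hxu : x ∈ u := (hu b hb).1 x hx
        have : x ∈ u.filter (fun y => y ∈ b.1) := Finset.mem_filter.mpr ⟨hxu, hx⟩
        rw [← h1] at this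
        exact (Finset.mem_filter.mp this).2
    · intro x
      constructor
      · intro hx
        have hxu : x ∈ u := (hu a ha).2 x hx
        have : x ∈ u.filter (fun y => y ∈ a.2) := Finset.mem_filter.mpr ⟨hxu, hx⟩
        rw [h2] at this
        exact (Finset.mem_filter.mp this).2
      · intro hx
        have hxu : x ∈ u := (hu b hb).2 x hx
        have : x ∈ u.filter (fun y => y ∈ b.2) := Finset.mem_filter.mpr ⟨hxu, hx⟩
        rw [← h2] at this
        exact (Finset.mem_filter.mp this).2
  have hlen : (l.map f).length = (l.map f).toFinset.card :=
    (List.toFinset_card_of_nodup hnd).symm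
  have hsub : (l.map f).toFinset ⊆ u.powerset ×ˢ u.powerset := by
    intro x hx
    rw [List.mem_toFinset, List.mem_map] at hx
    obtain ⟨q, hq, rfl⟩ := hx
    rw [Finset.mem_product]
    constructor <;> · rw [Finset.mem_powerset]; exact Finset.filter_subset _ _
  calc l.length = (l.map f).length := (List.length_map _).symm
    _ = (l.map f).toFinset.card := hlen
    _ ≤ (u.powerset ×ˢ u.powerset).card := Finset.card_le_card hsub
    _ = Bp u := rfl

end LNSKB

namespace LNSKB
open KFormula

lemma mu_same {u : Finset KFormula} {anc : KCtx} {Γ Δ Γ' Δ' : Multiset KFormula}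
    (h : sCard u Γ + sCard u Δ < sCard u Γ' + sCard u Δ') :
    μm u anc Γ' Δ' < μm u anc Γ Δ := by
  unfold μm
  have h1 := sCard_le u Γ'
  have h2 := sCard_le u Δ'
  omega

lemma mu_child {u : Finset KFormula} {anc : KCtx} {Γ Δ Γc Δc : Multiset KFormula}
    (hlen : (anc ++ [(Γ, Δ)]).length ≤ Bp u) :
    μm u (anc ++ [(Γ, Δ)]) Γc Δc < μm u anc Γ Δ := by
  unfold μm
  rw [List.length_append]
  simp only [List.length_cons, List.length_nil]
  rw [List.length_append, List.length_cons, List.length_nil] at hlen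
  set n := anc.length
  have hlm : n + 1 ≤ Lm u := by unfold Lm; omega
  have hkey : Lm u - n = (Lm u - (n + 1)) + 1 := by omega
  have hm2 : 2 * u.card - (sCard u Γc + sCard u Δc) < Cc u := by
    unfold Cc; omega
  calc (Lm u - (n + 1)) * Cc u + (2 * u.card - (sCard u Γc + sCard u Δc))
      < (Lm u - (n + 1)) * Cc u + Cc u := by omega
    _ = (Lm u - n) * Cc u := by rw [hkey, Nat.succ_mul]
    _ ≤ (Lm u - n) * Cc u + (2 * u.card - (sCard u Γ + sCard u Δ)) := Nat.le_add_right _ _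

/-- unboxing -/
def unbox : KFormula → Option KFormula
  | .box B => some B
  | _ => none

lemma unbox_eq_some {A B : KFormula} : unbox A = some B ↔ A = KFormula.box B := by
  cases A <;> simp [unbox]

def pushesM (Γ : Multiset KFormula) : Multiset KFormula := Γ.filterMap unbox

lemma mem_pushesM {Γ : Multiset KFormula} {D : KFormula} :
    D ∈ pushesM Γ ↔ KFormula.box D ∈ Γ := by
  unfold pushesM
  rw [Multiset.mem_filterMap]
  constructor
  · rintro ⟨a, ha, hu⟩
    rw [unbox_eq_some] at hu; subst hu; exact ha
  · intro h; exact ⟨KFormula.box D, h, by simp [unbox]⟩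

def boxesL (Δ : Multiset KFormula) : List KFormula := Δ.toList.filterMap unbox

lemma mem_boxesL {Δ : Multiset KFormula} {A : KFormula} :
    A ∈ boxesL Δ ↔ KFormula.box A ∈ Δ := by
  unfold boxesL
  rw [List.mem_filterMap]
  constructor
  · rintro ⟨a, ha, hu⟩
    rw [unbox_eq_some] at hu; subst hu
    rwa [← Multiset.mem_toList]
  · intro h
    exact ⟨KFormula.box A, by rwa [Multiset.mem_toList], by simp [unbox]⟩

lemma pushcon {anc : KCtx} {Γ Δ Θ Λ : Multiset KFormula} (L : Multiset KFormula)
    (hL : ∀ D ∈ L, KFormula.box D ∈ Γ)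
    (h : Con (anc ++ [(Γ, Δ)]) Θ Λ) : Con (anc ++ [(Γ, Δ)]) (L + Θ) Λ := by
  induction L using Multiset.induction with
  | empty => simpa using h
  | cons D L ih =>
      have h1 : Con (anc ++ [(Γ, Δ)]) (L + Θ) Λ :=
        ih (fun D' hD' => hL D' (Multiset.mem_cons_of_mem hD'))
      have := con_boxL1 h1 (hL D (Multiset.mem_cons_self _ _))
      rwa [show D ::ₘ L + Θ = D ::ₘ (L + Θ) from Multiset.cons_add _ _ _]

end LNSKB

namespace LNSKB
open KFormula

lemma concat_injKC {l₁ l₂ : KCtx} {a b : Multiset KFormula × Multiset KFormula}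
    (h : l₁ ++ [a] = l₂ ++ [b]) : l₁ = l₂ ∧ a = b := by
  have h' := congrArg List.reverse h
  rw [List.reverse_append, List.reverse_append] at h'
  simp only [List.reverse_cons, List.reverse_nil, List.nil_append, List.singleton_append,
    List.cons.injEq] at h'
  exact ⟨List.reverse_injective h'.2, h'.1⟩

lemma Res_mono {u anc Γ Δ Γ' Δ'} (h : Res u anc Γ' Δ')
    (h1 : ∀ x ∈ Γ, x ∈ Γ') (h2 : ∀ x ∈ Δ, x ∈ Δ') : Res u anc Γ Δ := by
  rcases h with h | ⟨Γ'', Δ'', 𝒲, hs1, hs2, h3, h4, h5, h6, h7⟩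
  · exact Or.inl h
  · exact Or.inr ⟨Γ'', Δ'', 𝒲, fun x hx => hs1 x (h1 x hx), fun x hx => hs2 x (h2 x hx),
      h3, h4, h5, h6, h7⟩

theorem sat (u : Finset KFormula) (hu : Closed u) :
    ∀ n : ℕ, ∀ anc : KCtx, ∀ Γ Δ : Multiset KFormula,
    μm u anc Γ Δ < n →
    List.Pairwise (fun a b => ¬ MEq a b) anc →
    (∀ q ∈ anc, (∀ x ∈ q.1, x ∈ u) ∧ (∀ x ∈ q.2, x ∈ u)) →
    (∀ x ∈ Γ, x ∈ u) → (∀ x ∈ Δ, x ∈ u) →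
    Con anc Γ Δ → Res u anc Γ Δ := by
  intro n
  induction n with
  | zero => intro anc Γ Δ hμ; exact absurd hμ (Nat.not_lt_zero _)
  | succ n IH =>
    intro anc Γ Δ hμ hpw hancU hΓU hΔU hcon
    by_cases hps : PropSatP Γ Δ
    case neg =>
      rcases not_and_or.mp hps with hL | hR
      · push_neg at hL
        obtain ⟨A, B, hmem, hAΔ, hBΓ⟩ := hL
        have hABu : A ∈ u ∧ B ∈ u := hu.impc A B (hΓU _ hmem)
        rcases con_impL hcon hmem with hc | hc
        · have hμ' : μm u anc (B ::ₘ Γ) Δ < n := by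
            have := mu_same (u := u) (anc := anc) (Γ := Γ) (Δ := Δ)
              (Γ' := B ::ₘ Γ) (Δ' := Δ)
              (by have := sCard_cons_lt u Γ B hABu.2 hBΓ; omega)
            omega
          have hres := IH anc (B ::ₘ Γ) Δ hμ' hpw hancU
            (by intro x hx; rcases Multiset.mem_cons.mp hx with rfl | hx
                · exact hABu.2
                · exact hΓU x hx) hΔU hc
          exact Res_mono hres (fun x hx => Multiset.mem_cons_of_mem hx) (fun x hx => hx)
        · have hμ' : μm u anc Γ (A ::ₘ Δ) < n := by
            have := mu_same (u := u) (anc := anc) (Γ := Γ) (Δ := Δ)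
              (Γ' := Γ) (Δ' := A ::ₘ Δ)
              (by have := sCard_cons_lt u Δ A hABu.1 hAΔ; omega)
            omega
          have hres := IH anc Γ (A ::ₘ Δ) hμ' hpw hancU hΓU
            (by intro x hx; rcases Multiset.mem_cons.mp hx with rfl | hx
                · exact hABu.1
                · exact hΔU x hx) hc
          exact Res_mono hres (fun x hx => hx) (fun x hx => Multiset.mem_cons_of_mem hx)
      · push_neg at hR
        obtain ⟨A, B, hmem, hnab⟩ := hR
        have hABu : A ∈ u ∧ B ∈ u := hu.impc A B (hΔU _ hmem)
        have hc := con_impR hcon hmem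
        have hstrict : sCard u Γ + sCard u Δ < sCard u (A ::ₘ Γ) + sCard u (B ::ₘ Δ) := by
          have l1 := sCard_cons_le u Γ A
          have l2 := sCard_cons_le u Δ B
          by_cases hA : A ∈ Γ
          · have hB : B ∉ Δ := hnab hA
            have := sCard_cons_lt u Δ B hABu.2 hB
            omega
          · have := sCard_cons_lt u Γ A hABu.1 hA
            omega
        have hμ' : μm u anc (A ::ₘ Γ) (B ::ₘ Δ) < n := by
          have := mu_same (u := u) (anc := anc) hstrict
          omega
        have hres := IH anc (A ::ₘ Γ) (B ::ₘ Δ) hμ' hpw hancU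
          (by intro x hx; rcases Multiset.mem_cons.mp hx with rfl | hx
              · exact hABu.1
              · exact hΓU x hx)
          (by intro x hx; rcases Multiset.mem_cons.mp hx with rfl | hx
              · exact hABu.2
              · exact hΔU x hx) hc
        exact Res_mono hres (fun x hx => Multiset.mem_cons_of_mem hx)
          (fun x hx => Multiset.mem_cons_of_mem hx)
    case pos =>
    by_cases hif : ∀ A, KFormula.box A ∈ Γ →
        ∀ anc' Sg Pg, anc = anc' ++ [(Sg, Pg)] → A ∈ Sg
    case neg =>
      push_neg at hif
      obtain ⟨A, hbox, anc', Sg, Pg, heq, hAn⟩ := hif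
      have hAu : A ∈ u := hu.boxc A (hΓU _ hbox)
      refine Or.inl ⟨A, anc', Sg, Pg, heq, hAu, hAn, ?_⟩
      exact con_boxL2 (by rwa [heq] at hcon) hbox
    case pos =>
    by_cases hbl : ∃ q ∈ anc, MEq (Γ, Δ) q
    case pos =>
      refine Or.inr ⟨Γ, Δ, [], fun x hx => hx, fun x hx => hx, hΓU, hΔU,
        ?_, hif, Or.inr hbl⟩
      intro q hq
      exact absurd hq List.not_mem_nil
    case neg =>
      -- children processing
      push_neg at hbl
      have hpw' : List.Pairwise (fun a b => ¬ MEq a b) (anc ++ [(Γ, Δ)]) := by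
        rw [List.pairwise_append]
        refine ⟨hpw, List.pairwise_singleton _ _, ?_⟩
        intro a ha b hb
        rw [List.mem_singleton] at hb
        subst hb
        intro hme
        exact hbl a ha hme.symm
      have hancU' : ∀ q ∈ anc ++ [(Γ, Δ)], (∀ x ∈ q.1, x ∈ u) ∧ (∀ x ∈ q.2, x ∈ u) := by
        intro q hq
        rcases List.mem_append.mp hq with hq | hq
        · exact hancU q hq
        · rw [List.mem_singleton] at hq; subst hq; exact ⟨hΓU, hΔU⟩
      have hlen : (anc ++ [(Γ, Δ)]).length ≤ Bp u := pairwise_len _ hpw' hancU'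
      have aux : ∀ todo : List KFormula, (∀ A ∈ todo, KFormula.box A ∈ Δ) →
          (∃ A', A' ∈ u ∧ A' ∉ Γ ∧ Con anc (A' ::ₘ Γ) Δ) ∨
          (∃ 𝒲s : List MPair, goodW u 𝒲s (anc ++ [(Γ, Δ)]) ∧
            ∀ A ∈ todo, ∃ q', (q' ∈ 𝒲s ∨ q' ∈ anc ++ [(Γ, Δ)]) ∧ Rel (Γ, Δ) q' ∧ A ∈ q'.2) := by
        intro todo
        induction todo with
        | nil =>
            intro _
            refine Or.inr ⟨[], ?_, by simp⟩
            intro q hq; exact absurd hq List.not_mem_nil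
        | cons A todo ihtodo =>
            intro hmem
            have hboxA : KFormula.box A ∈ Δ := hmem A List.mem_cons_self
            have hc0 : Con (anc ++ [(Γ, Δ)]) 0 {A} := con_boxR hcon hboxA
            have hc1 : Con (anc ++ [(Γ, Δ)]) (pushesM Γ) {A} := by
              have := pushcon (anc := anc) (Γ := Γ) (Δ := Δ) (pushesM Γ)
                (fun D hD => mem_pushesM.mp hD) hc0
              rwa [add_zero] at this
            have hμc : μm u (anc ++ [(Γ, Δ)]) (pushesM Γ) {A} < n := by
              have := mu_child (u := u) (Γc := pushesM Γ) (Δc := ({A} : Multiset KFormula)) hlen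
              omega
            have hres := IH (anc ++ [(Γ, Δ)]) (pushesM Γ) {A} hμc hpw' hancU'
              (by intro x hx
                  exact hu.boxc x (hΓU _ (mem_pushesM.mp hx)))
              (by intro x hx
                  rw [Multiset.mem_singleton] at hx; subst hx
                  exact hu.boxc _ (hΔU _ hboxA)) hc1
            rcases hres with ⟨A', anc'', Sg, Pg, heq, hA'u, hA'n, hA'c⟩ |
              ⟨Γc, Δc, 𝒲c, hsub1, hsub2, hΓcU, hΔcU, hgw, hifc, hpairc⟩
            · obtain ⟨heq1, heq2⟩ := concat_injKC heq
              injection heq2 with e1 e2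
              subst heq1; subst e1; subst e2
              exact Or.inl ⟨A', hA'u, hA'n, hA'c⟩
            · have hrel : Rel (Γ, Δ) (Γc, Δc) :=
                ⟨fun D hD => hsub1 D (mem_pushesM.mpr hD),
                 fun D hD => hifc D hD anc Γ Δ rfl⟩
              have hAin : A ∈ Δc := hsub2 A (Multiset.mem_singleton_self _)
              rcases ihtodo (fun B hB => hmem B (List.mem_cons_of_mem _ hB)) with h | ⟨𝒲r, hgwr, hwit⟩
              · exact Or.inl h
              · refine Or.inr ⟨𝒲c ++ 𝒲r, ?_, ?_⟩
                · intro q hq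
                  rcases List.mem_append.mp hq with hq' | hq'
                  · exact goodW_mono hgw (by
                      intro r hr
                      rcases hr with hr | hr
                      · exact Or.inl (List.mem_append_left _ hr)
                      · exact Or.inr hr) q hq'
                  · exact goodW_mono hgwr (by
                      intro r hr
                      rcases hr with hr | hr
                      · exact Or.inl (List.mem_append_right _ hr)
                      · exact Or.inr hr) q hq'
                · intro B hB
                  rcases List.mem_cons.mp hB with hBA | hB'
                  · subst hBA
                    rcases hpairc with hin | ⟨q₀, hq₀, hme⟩
                    · exact ⟨(Γc, Δc), Or.inl (List.mem_append_left _ hin), hrel, hAin⟩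
                    · exact ⟨q₀, Or.inr hq₀, Rel_congr_right hrel hme, (hme.2 B).mp hAin⟩
                  · obtain ⟨q', hq', hr, hm⟩ := hwit B hB'
                    rcases hq' with hq' | hq'
                    · exact ⟨q', Or.inl (List.mem_append_right _ hq'), hr, hm⟩
                    · exact ⟨q', Or.inr hq', hr, hm⟩
      rcases aux (boxesL Δ) (fun A hA => mem_boxesL.mp hA) with
        ⟨A', hA'u, hA'n, hA'c⟩ | ⟨𝒲s, hgws, hwits⟩
      · have hμ' : μm u anc (A' ::ₘ Γ) Δ < n := by
          have := mu_same (u := u) (anc := anc) (Γ := Γ) (Δ := Δ)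
            (Γ' := A' ::ₘ Γ) (Δ' := Δ)
            (by have := sCard_cons_lt u Γ A' hA'u hA'n; omega)
          omega
        have hres := IH anc (A' ::ₘ Γ) Δ hμ' hpw hancU
          (by intro x hx; rcases Multiset.mem_cons.mp hx with rfl | hx
              · exact hA'u
              · exact hΓU x hx) hΔU hA'c
        exact Res_mono hres (fun x hx => Multiset.mem_cons_of_mem hx) (fun x hx => hx)
      · refine Or.inr ⟨Γ, Δ, (Γ, Δ) :: 𝒲s, fun x hx => hx, fun x hx => hx, hΓU, hΔU,
          ?_, hif, Or.inl List.mem_cons_self⟩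
        intro q hq
        rcases List.mem_cons.mp hq with rfl | hq'
        · refine ⟨hps, fun p hp => con_clash hcon p hp.1 hp.2, fun hb => con_bot hcon hb,
            hΓU, hΔU, ?_⟩
          intro A hA
          obtain ⟨q', hq', hr, hm⟩ := hwits A (mem_boxesL.mpr hA)
          rcases hq' with hq' | hq'
          · exact ⟨q', Or.inl (List.mem_cons_of_mem _ hq'), hr, hm⟩
          · rcases List.mem_append.mp hq' with h | h
            · exact ⟨q', Or.inr h, hr, hm⟩
            · rw [List.mem_singleton] at h; subst h
              exact ⟨(Γ, Δ), Or.inl List.mem_cons_self, hr, hm⟩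
        · exact goodW_mono hgws (by
            intro r hr
            rcases hr with hr | hr
            · exact Or.inl (List.mem_cons_of_mem _ hr)
            · rcases List.mem_append.mp hr with h | h
              · exact Or.inr h
              · rw [List.mem_singleton] at h; subst h
                exact Or.inl List.mem_cons_self) q hq'

end LNSKB

namespace LNSKB
open KFormula

section Truth

variable {u : Finset KFormula} (hu : Closed u) {𝒲 : List MPair}
  (hgw : goodW u 𝒲 [])

/-- The countermodel built from a good collection of worlds. -/
lemma truth (hu : Closed u) (hgw : goodW u 𝒲 []) :
    ∀ A : KFormula, A ∈ u → ∀ q : {q : MPair // q ∈ 𝒲},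
      (A ∈ q.1.1 → KForce (fun a b : {q : MPair // q ∈ 𝒲} => Rel a.1 b.1)
        (fun a p => KFormula.atom p ∈ a.1.1) q A) ∧
      (A ∈ q.1.2 → ¬ KForce (fun a b : {q : MPair // q ∈ 𝒲} => Rel a.1 b.1)
        (fun a p => KFormula.atom p ∈ a.1.1) q A) := by
  intro A
  induction A with
  | atom p =>
      intro _ q
      constructor
      · intro h; exact h
      · intro h hf
        exact (hgw q.1 q.2).2.1 p ⟨hf, h⟩
  | bot =>
      intro _ q
      constructor
      · intro h; exact absurd h (hgw q.1 q.2).2.2.1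
      · intro _ hf; exact hf
  | imp A B ihA ihB =>
      intro hm q
      obtain ⟨hAu, hBu⟩ := hu.impc A B hm
      constructor
      · intro h hf
        rcases ((hgw q.1 q.2).1).1 A B h with h' | h'
        · exact absurd hf ((ihA hAu q).2 h')
        · exact (ihB hBu q).1 h'
      · intro h hf
        obtain ⟨h1, h2⟩ := ((hgw q.1 q.2).1).2 A B h
        exact (ihB hBu q).2 h2 (hf ((ihA hAu q).1 h1))
  | box A ihA =>
      intro hm q
      have hAu : A ∈ u := hu.boxc A hm
      constructor
      · intro h
        intro v hRv
        exact (ihA hAu v).1 (hRv.1 A h)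
      · intro h hf
        obtain ⟨q', hq', hrel, hmem⟩ := (hgw q.1 q.2).2.2.2.2.2 A h
        rcases hq' with hq' | hq'
        · exact (ihA hAu ⟨q', hq'⟩).2 hmem (hf ⟨q', hq'⟩ hrel)
        · exact absurd hq' List.not_mem_nil
  | dia A ihA =>
      intro hm
      exact absurd (hu.nod _ hm) (by simp [KFormula.NoDia])

end Truth

end LNSKB

theorem lnskb_complete' (φ : KFormula) (hφ : φ.NoDia)
    (hv : ∀ (W : Type) (_ : Nonempty W) (R : W → W → Prop),
      (∀ x y, R x y → R y x) →
        ∀ (V : W → ℕ → Prop) (w : W), KForce R V w φ) :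
    DerivKB (KLNS.single 0 {φ}) := by
  classical
  by_contra hD
  have hcon : LNSKB.Con [] 0 {φ} := hD
  set u := LNSKB.subF φ with hudef
  have hu : LNSKB.Closed u := LNSKB.closed_subF φ hφ
  have hres := LNSKB.sat u hu (LNSKB.μm u [] 0 {φ} + 1) [] 0 {φ}
    (Nat.lt_succ_self _) List.Pairwise.nil
    (by intro q hq; exact absurd hq List.not_mem_nil)
    (by intro x hx; exact absurd hx (by simp))
    (by intro x hx
        rw [Multiset.mem_singleton] at hx
        rw [hx]
        exact LNSKB.mem_subF_self φ)
    hcon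
  rcases hres with ⟨A, anc', Sg, Pg, heq, _⟩ | ⟨Γ', Δ', 𝒲, hs1, hs2, hΓ'U, hΔ'U, hgw, _, hpair⟩
  · exact absurd heq.symm (List.append_ne_nil_of_right_ne_nil _ (by simp))
  · have hin : (Γ', Δ') ∈ 𝒲 := by
      rcases hpair with h | ⟨q, hq, _⟩
      · exact h
      · exact absurd hq List.not_mem_nil
    have hφΔ : φ ∈ Δ' := hs2 φ (Multiset.mem_singleton_self _)
    set W := {q : LNSKB.MPair // q ∈ 𝒲} with hW
    have hne : Nonempty W := ⟨⟨(Γ', Δ'), hin⟩⟩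
    set R : W → W → Prop := fun a b => LNSKB.Rel a.1 b.1 with hR
    have hsymm : ∀ x y : W, R x y → R y x := fun x y h => LNSKB.Rel.symm h
    set V : W → ℕ → Prop := fun a p => KFormula.atom p ∈ a.1.1 with hV
    have hforce := hv W hne R hsymm V ⟨(Γ', Δ'), hin⟩
    have htruth := LNSKB.truth hu hgw φ (LNSKB.mem_subF_self φ) ⟨(Γ', Δ'), hin⟩
    exact htruth.2 hφΔ hforce


/-- Completeness of LNS_KB: every mono-modal formula built from atoms, ⊥, →, □
valid over symmetric Kripke models is derivable. -/
theorem lnskb_complete (φ : KFormula) (hφ : φ.NoDia)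
    (hv : ∀ (W : Type) (_ : Nonempty W) (R : W → W → Prop),
      (∀ x y, R x y → R y x) →
        ∀ (V : W → ℕ → Prop) (w : W), KForce R V w φ) :
    DerivKB (KLNS.single 0 {φ}) :=
  lnskb_complete' φ hφ hv
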